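/- If G is a simple graph which is a cycle (of length n ≥ 3), then χ'_g(G) = χ'_gl(G) = 3. -/

import Mathlib

open SimpleGraph
open scoped Fin.NatCast Fin.CommRing

/-- `G` is `A`-colorable for the Abelian group `A`: for every "oriented weight" `f` on the
edges (encoded as an antisymmetric function on ordered pairs, which is equivalent to fixing an
orientation `D` of `E(G)` and a function `E(G) → A`), there is an `(A,f)`-coloring, i.e. a
vertex coloring `c : V → A` with `c u - c v ≠ f u v` for every edge oriented from `u` to `v`. -/
def IsGroupColorable {V : Type*} (G : SimpleGraph V) (A : Type) [AddCommGroup A] : Prop :=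
  ∀ f : V → V → A, (∀ u v, f v u = - f u v) →
    ∃ c : V → A, ∀ u v, G.Adj u v → c u - c v ≠ f u v

/-- The group chromatic number `χ_g(G)`: the least `m` such that `G` is `A`-colorable for
every Abelian group `A` of order at least `m`. -/
noncomputable def groupChromaticNumber {V : Type*} (G : SimpleGraph V) : ℕ :=
  sInf {m : ℕ | ∀ (A : Type) [AddCommGroup A] [Fintype A],
    m ≤ Fintype.card A → IsGroupColorable G A}

/-- `G` is group `k`-choosable: for every Abelian group `A` of order at least `k`, every
`k`-uniform list assignment `L`, and every antisymmetric edge weight `f` (i.e. an orientation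
together with a function `E(G) → A`), there is an `(A,L,f)`-coloring. -/
def IsGroupChoosable {V : Type*} (G : SimpleGraph V) (k : ℕ) : Prop :=
  ∀ (A : Type) [AddCommGroup A] [Fintype A], k ≤ Fintype.card A →
    ∀ L : V → Finset A, (∀ v, (L v).card = k) →
      ∀ f : V → V → A, (∀ u v, f v u = - f u v) →
        ∃ c : V → A, (∀ v, c v ∈ L v) ∧ ∀ u v, G.Adj u v → c u - c v ≠ f u v

/-- The group choice number `χ_gl(G)`: the least `k` such that `G` is group `k`-choosable. -/
noncomputable def groupChoiceNumber {V : Type*} (G : SimpleGraph V) : ℕ :=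
  sInf {k : ℕ | IsGroupChoosable G k}

/-- `G` is group `k`-edge-choosable iff its line graph is group `k`-choosable. -/
def IsGroupEdgeChoosable {V : Type*} (G : SimpleGraph V) (k : ℕ) : Prop :=
  IsGroupChoosable G.lineGraph k

/-- The group edge chromatic number `χ'_g(G) = χ_g(𝓛(G))`. -/
noncomputable def groupEdgeChromaticNumber {V : Type*} (G : SimpleGraph V) : ℕ :=
  groupChromaticNumber G.lineGraph

/-- The group edge choice number `χ'_gl(G) = χ_gl(𝓛(G))`. -/
noncomputable def groupEdgeChoiceNumber {V : Type*} (G : SimpleGraph V) : ℕ :=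
  groupChoiceNumber G.lineGraph

/-- `G` is a cycle (of some length `n ≥ 3`). -/
def IsCycleGraph {V : Type*} (G : SimpleGraph V) : Prop :=
  ∃ n : ℕ, 3 ≤ n ∧ Nonempty (G ≃g cycleGraph n)





theorem isGroupColorable_of_iso {V W : Type*} {G : SimpleGraph V} {H : SimpleGraph W}
    (e : G ≃g H) (A : Type) [AddCommGroup A] (h : IsGroupColorable H A) :
    IsGroupColorable G A := by
  intro f hf
  obtain ⟨c, hc⟩ := h (fun u v => f (e.symm u) (e.symm v)) (fun u v => hf _ _)
  refine ⟨fun v => c (e v), fun u v huv h' => ?_⟩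
  have := hc (e u) (e v) (e.map_adj_iff.mpr huv)
  simp only [RelIso.symm_apply_apply] at this
  exact this h'

theorem isGroupChoosable_of_iso {V W : Type*} {G : SimpleGraph V} {H : SimpleGraph W}
    (e : G ≃g H) (k : ℕ) (h : IsGroupChoosable H k) :
    IsGroupChoosable G k := by
  intro A _ _ hA L hL f hf
  obtain ⟨c, hc1, hc2⟩ := h A hA (fun v => L (e.symm v)) (fun v => hL _)
    (fun u v => f (e.symm u) (e.symm v)) (fun u v => hf _ _)
  refine ⟨fun v => c (e v), fun v => by simpa using hc1 (e v), fun u v huv h' => ?_⟩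
  have := hc2 (e u) (e v) (e.map_adj_iff.mpr huv)
  simp only [RelIso.symm_apply_apply] at this
  exact this h'

/-- Isomorphic graphs have isomorphic line graphs. -/
noncomputable def lineGraphIso {V W : Type*} {G : SimpleGraph V} {H : SimpleGraph W}
    (e : G ≃g H) : G.lineGraph ≃g H.lineGraph where
  toEquiv := e.mapEdgeSet
  map_rel_iff' := by
    rintro ⟨s, hs⟩ ⟨t, ht⟩
    simp only [lineGraph, Iso.mapEdgeSet, Equiv.coe_fn_mk, Hom.mapEdgeSet, ne_eq,
      Subtype.mk.injEq]
    constructor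
    · rintro ⟨hne, v, hv⟩
      constructor
      · intro h; exact hne (by rw [h])
      · simp only [Set.mem_inter_iff] at hv
        obtain ⟨a, ha, hav⟩ := Sym2.mem_map.mp hv.1
        obtain ⟨b, hb, hbv⟩ := Sym2.mem_map.mp hv.2
        have hab : a = b := e.injective (by exact hav.trans hbv.symm)
        exact ⟨a, ha, hab ▸ hb⟩
    · rintro ⟨hne, v, hv⟩
      constructor
      · intro h
        exact hne (Sym2.map.injective e.injective h)
      · simp only [Set.mem_inter_iff] at hv
        exact ⟨e v, Sym2.mem_map.mpr ⟨v, hv.1, rfl⟩, Sym2.mem_map.mpr ⟨v, hv.2, rfl⟩⟩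


lemma fin_two_ne_zero (m : ℕ) : (2 : Fin (m + 3)) ≠ 0 := by
  simp [Fin.ext_iff, Fin.val_two, Nat.mod_eq_of_lt (show 2 < m + 3 by omega)]

lemma fin_one_ne_zero' (m : ℕ) : (1 : Fin (m + 3)) ≠ 0 := by
  simp [Fin.ext_iff]

lemma cycle_adj_succ (m : ℕ) (i : Fin (m + 3)) : (cycleGraph (m + 3)).Adj i (i + 1) := by
  rw [cycleGraph_adj]
  right
  exact add_sub_cancel_left i 1

lemma succ_succ_ne (m : ℕ) (i j : Fin (m + 3)) (h : i = j + 1) (h' : j = i + 1) : False := by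
  apply fin_two_ne_zero m
  have hii : i = i + 2 := by nth_rewrite 1 [h, h']; ring
  nth_rewrite 1 [← add_zero i] at hii
  exact (add_left_cancel hii).symm

lemma edge_ne_succ (m : ℕ) (i j : Fin (m + 3)) (hij : i = j + 1) :
    s(i, i + 1) ≠ s(j, j + 1) := by
  intro hc
  rcases Sym2.eq_iff.mp hc with ⟨ha, _⟩ | ⟨_, hb⟩
  · exact fin_one_ne_zero' m (by rwa [hij, add_eq_left] at ha)
  · exact succ_succ_ne m i j hij (by rw [← hb, hij])

noncomputable def cycleLineIso (m : ℕ) :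
    cycleGraph (m + 3) ≃g (cycleGraph (m + 3)).lineGraph := by
  have hadj := cycle_adj_succ m
  have key : ∀ i j : Fin (m + 3), s(i, i + 1) = s(j, j + 1) → i = j := by
    intro i j h
    rcases Sym2.eq_iff.mp h with ⟨h, _⟩ | ⟨h, h'⟩
    · exact h
    · exact absurd h' (fun h'' => succ_succ_ne m i j h h''.symm)
  refine ⟨Equiv.ofBijective
    (fun i => ⟨s(i, i + 1), (cycleGraph (m + 3)).mem_edgeSet.mpr (hadj i)⟩) ⟨?_, ?_⟩, ?_⟩
  · intro i j h
    exact key i j (congrArg Subtype.val h)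
  · rintro ⟨e, he⟩
    induction e using Sym2.ind with
    | _ u v =>
      rw [mem_edgeSet, cycleGraph_adj] at he
      rcases he with h | h
      · have hu : u = v + 1 := sub_eq_iff_eq_add'.mp h
        exact ⟨v, Subtype.ext (by simp only; rw [hu]; exact Sym2.eq_swap)⟩
      · have hv : v = u + 1 := sub_eq_iff_eq_add'.mp h
        exact ⟨u, Subtype.ext (by simp only; rw [hv])⟩
  · intro i j
    simp only [Equiv.ofBijective_apply, Equiv.ofBijective, Equiv.coe_fn_mk, lineGraph, ne_eq, Subtype.mk.injEq]
    rw [cycleGraph_adj]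
    constructor
    · rintro ⟨hne, v, hv⟩
      have hv1 : v ∈ s(i, i + 1) := hv.1
      have hv2 : v ∈ s(j, j + 1) := hv.2
      rw [Sym2.mem_iff] at hv1 hv2
      rcases hv1 with h1' | h1' <;> rcases hv2 with h2' | h2'
      · exact absurd (h1'.symm.trans h2') (fun h : i = j => hne (by rw [h]))
      · left; rw [h1'.symm.trans h2']; exact add_sub_cancel_left j 1
      · right; rw [h2'.symm.trans h1']; exact add_sub_cancel_left i 1
      · exact absurd (add_right_cancel (h1'.symm.trans h2' : i + 1 = j + 1))
          (fun h : i = j => hne (by rw [h]))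
    · rintro (h | h)
      · have hij : i = j + 1 := sub_eq_iff_eq_add'.mp h
        exact ⟨edge_ne_succ m i j hij, i, by simp, by rw [hij]; simp⟩
      · have hij : j = i + 1 := sub_eq_iff_eq_add'.mp h
        refine ⟨fun hc => edge_ne_succ m j i hij hc.symm, j, by rw [hij]; simp, by simp⟩

noncomputable def lineCycleIso (m : ℕ) :
    (cycleGraph (m + 3)).lineGraph ≃g cycleGraph (m + 3) := (cycleLineIso m).symm



noncomputable def pick {A : Type} [AddCommGroup A] (s : Finset A) : A :=
  if h : s.Nonempty then h.choose else 0

lemma pick_mem {A : Type} [AddCommGroup A] {s : Finset A} (h : s.Nonempty) : pick s ∈ s := by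
  rw [pick, dif_pos h]; exact h.choose_spec

/-- The "forbidden set" for the greedy choice at position `k+1`. -/
noncomputable def forb (m : ℕ) {A : Type} [AddCommGroup A] [DecidableEq A]
    (f : Fin (m + 3) → Fin (m + 3) → A) (L : Fin (m + 3) → Finset A) (k : ℕ) (p : A) : Finset A :=
  insert (p - f ((k : ℕ) : Fin (m + 3)) ((k + 1 : ℕ) : Fin (m + 3)))
    (if k + 2 = m + 3 then {pick (L 0) + f ((k + 1 : ℕ) : Fin (m + 3)) 0} else ∅)

lemma forb_card_le (m : ℕ) {A : Type} [AddCommGroup A] [DecidableEq A]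
    (f : Fin (m + 3) → Fin (m + 3) → A) (L : Fin (m + 3) → Finset A) (k : ℕ) (p : A) :
    (forb m f L k p).card ≤ 2 := by
  refine (Finset.card_insert_le _ _).trans ?_
  have : (if k + 2 = m + 3 then ({pick (L 0) + f ((k + 1 : ℕ) : Fin (m + 3)) 0} : Finset A)
      else ∅).card ≤ 1 := by
    split <;> simp
  omega

noncomputable def greedy (m : ℕ) {A : Type} [AddCommGroup A] [DecidableEq A]
    (L : Fin (m + 3) → Finset A) (f : Fin (m + 3) → Fin (m + 3) → A) : ℕ → A
  | 0 => pick (L 0)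
  | (k + 1) => pick ((L ((k + 1 : ℕ) : Fin (m + 3))) \ forb m f L k (greedy m L f k))

section
variable (m : ℕ) {A : Type} [AddCommGroup A] [DecidableEq A]
  (L : Fin (m + 3) → Finset A) (f : Fin (m + 3) → Fin (m + 3) → A)

lemma greedy_sdiff_nonempty (hL : ∀ v, (L v).card = 3) (k : ℕ) (p : A) :
    ((L ((k + 1 : ℕ) : Fin (m + 3))) \ forb m f L k p).Nonempty := by
  rw [← Finset.card_pos]
  have h1 := Finset.le_card_sdiff (forb m f L k p) (L ((k + 1 : ℕ) : Fin (m + 3)))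
  have h2 := forb_card_le m f L k p
  rw [hL] at h1
  omega

lemma greedy_mem (hL : ∀ v, (L v).card = 3) : ∀ k : ℕ, greedy m L f k ∈ L ((k : ℕ) : Fin (m + 3))
  | 0 => by simpa [greedy] using pick_mem (Finset.card_pos.mp (by rw [hL]; norm_num))
  | (k + 1) => by
      have := pick_mem (greedy_sdiff_nonempty m L f hL k (greedy m L f k))
      rw [Finset.mem_sdiff] at this
      exact this.1

lemma greedy_not_forb (hL : ∀ v, (L v).card = 3) (k : ℕ) :
    greedy m L f (k + 1) ∉ forb m f L k (greedy m L f k) := by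
  have := pick_mem (greedy_sdiff_nonempty m L f hL k (greedy m L f k))
  rw [Finset.mem_sdiff] at this
  exact this.2

lemma greedy_ne1 (hL : ∀ v, (L v).card = 3) (k : ℕ) :
    greedy m L f (k + 1) ≠
      greedy m L f k - f ((k : ℕ) : Fin (m + 3)) ((k + 1 : ℕ) : Fin (m + 3)) := by
  intro h
  exact greedy_not_forb m L f hL k (by rw [forb, h]; exact Finset.mem_insert_self _ _)

lemma greedy_ne2 (hL : ∀ v, (L v).card = 3) :
    greedy m L f (m + 2) ≠ pick (L 0) + f ((m + 1 + 1 : ℕ) : Fin (m + 3)) 0 := by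
  intro h
  apply greedy_not_forb m L f hL (m + 1)
  rw [forb, if_pos rfl, h]
  exact Finset.mem_insert_of_mem (Finset.mem_singleton_self _)
end

lemma aux_orient1 {A : Type} [AddCommGroup A] {a b x : A} (h : b ≠ a - x) :
    a - b ≠ x ∧ b - a ≠ -x := by
  constructor
  · intro hc; apply h; rw [← hc]; abel
  · intro hc; apply h; rw [sub_eq_iff_eq_add] at hc; rw [hc]; abel

lemma aux_orient2 {A : Type} [AddCommGroup A] {a b x : A} (h : a ≠ b + x) :
    a - b ≠ x ∧ b - a ≠ -x := by
  constructor
  · intro hc; apply h; rw [← hc]; abel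
  · intro hc; apply h; rw [sub_eq_iff_eq_add] at hc; rw [hc]; abel

theorem cycle_choosable (m : ℕ) : IsGroupChoosable (cycleGraph (m + 3)) 3 := by
  classical
  intro A _ _ hA L hL f hf
  let c : Fin (m + 3) → A := fun i => greedy m L f i.val
  have hmem : ∀ i : Fin (m + 3), c i ∈ L i := by
    intro i
    have := greedy_mem m L f hL i.val
    rwa [Fin.cast_val_eq_self] at this
  have key : ∀ u v : Fin (m + 3), v = u + 1 → (c u - c v ≠ f u v ∧ c v - c u ≠ -f u v) := by
    intro u v huv
    by_cases hlast : u = Fin.last (m + 2)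
    · subst hlast
      have hv0 : v = 0 := by rw [huv]; exact Fin.last_add_one (m + 2)
      subst hv0
      have hne := greedy_ne2 m L f hL
      have harg : ((m + 1 + 1 : ℕ) : Fin (m + 3)) = Fin.last (m + 2) := by
        apply Fin.ext
        rw [Fin.val_cast_of_lt (by omega)]
        rfl
      rw [harg] at hne
      have h1 : greedy m L f (m + 2) = c (Fin.last (m + 2)) := rfl
      have h2 : pick (L 0) = c 0 := rfl
      rw [h1, h2] at hne
      exact aux_orient2 hne
    · -- u.val + 1 < m + 3
      have hval : u.val + 1 < m + 3 := by
        have := u.isLt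
        rcases Nat.lt_or_ge (u.val + 1) (m + 3) with h | h
        · exact h
        · exact absurd (Fin.ext (by omega : u.val = m + 2)) hlast
      have hvv : v.val = u.val + 1 := by
        rw [huv, Fin.val_add_one_of_lt]
        exact Fin.lt_last_iff_ne_last.mpr hlast
      have hne := greedy_ne1 m L f hL u.val
      have e1 : ((u.val : ℕ) : Fin (m + 3)) = u := Fin.cast_val_eq_self u
      have e2 : ((u.val + 1 : ℕ) : Fin (m + 3)) = v := by
        apply Fin.ext
        rw [Fin.val_cast_of_lt hval, hvv]
      rw [e1, e2] at hne
      have h1 : greedy m L f (u.val + 1) = c v := by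
        rw [show c v = greedy m L f v.val from rfl, hvv]
      have h2 : greedy m L f u.val = c u := rfl
      rw [h1, h2] at hne
      exact aux_orient1 hne
  refine ⟨c, hmem, ?_⟩
  intro u v hadj
  rw [cycleGraph_adj] at hadj
  rcases hadj with h | h
  · -- u - v = 1, u = v + 1
    have huv : u = v + 1 := sub_eq_iff_eq_add'.mp h
    rw [hf v u]
    exact (key v u huv).2
  · have hvu : v = u + 1 := sub_eq_iff_eq_add'.mp h
    exact (key u v hvu).1



lemma cycle_mk_adj (m : ℕ) (k : ℕ) (h : k + 1 < m + 3) :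
    (cycleGraph (m + 3)).Adj ⟨k, by omega⟩ ⟨k + 1, h⟩ := by
  rw [cycleGraph_adj]
  right
  rw [Fin.ext_iff, Fin.sub_def]
  simp only [Fin.val_one]
  show (m + 3 - k + (k + 1)) % (m + 3) = 1
  rw [show m + 3 - k + (k + 1) = (m + 3) + 1 by omega, Nat.add_mod_left]
  exact Nat.mod_eq_of_lt (by omega)

lemma cycle_mk_adj_last (m : ℕ) :
    (cycleGraph (m + 3)).Adj ⟨m + 2, by omega⟩ ⟨0, by omega⟩ := by
  rw [cycleGraph_adj]
  right
  rw [Fin.ext_iff, Fin.sub_def]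
  simp only [Fin.val_one]
  show (m + 3 - (m + 2) + 0) % (m + 3) = 1
  rw [show m + 3 - (m + 2) + 0 = 1 by omega]
  exact Nat.mod_eq_of_lt (by omega)

lemma cycle_not_colorable (m : ℕ) : ¬ IsGroupColorable (cycleGraph (m + 3)) (ZMod 2) := by
  classical
  intro h
  set f : Fin (m + 3) → Fin (m + 3) → ZMod 2 :=
    fun u v => if u.val + v.val = 1 then (m : ZMod 2) else 0 with hfdef
  have hf0 : ∀ u v : Fin (m + 3), u.val + v.val ≠ 1 → f u v = 0 := fun u v h' => if_neg h'
  have hf1 : ∀ u v : Fin (m + 3), u.val + v.val = 1 → f u v = (m : ZMod 2) :=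
    fun u v h' => if_pos h'
  have hneg : ∀ x : ZMod 2, -x = x := by decide
  obtain ⟨c, hc⟩ := h f (fun u v => by
    rw [hneg]
    simp only [hfdef, Nat.add_comm])
  have fact : ∀ x y z : ZMod 2, x - y ≠ z → x + y = z + 1 := by decide
  have key : ∀ u v, (cycleGraph (m + 3)).Adj u v → c u + c v = f u v + 1 :=
    fun u v h' => fact _ _ _ (hc u v h')
  have fact2 : ∀ x y z : ZMod 2, x + y = z + 1 → y = x + z + 1 := by decide
  have hstep : ∀ k, 1 ≤ k → ∀ (h' : k + 1 < m + 3),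
      c ⟨k + 1, h'⟩ = c ⟨k, by omega⟩ + 1 := by
    intro k hk h'
    have hk2 := key _ _ (cycle_mk_adj m k h')
    rw [hf0 _ _ (by simp only [Fin.val_mk]; omega)] at hk2
    rw [fact2 _ _ _ hk2]; ring
  have h01 : c ⟨1, by omega⟩ = c ⟨0, by omega⟩ + (m : ZMod 2) + 1 := by
    have hk2 := key _ _ (cycle_mk_adj m 0 (by omega))
    rw [hf1 _ _ (by simp only [Fin.val_mk])] at hk2
    exact fact2 _ _ _ hk2
  have claim : ∀ k, ∀ (h' : k + 1 < m + 3),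
      c ⟨k + 1, h'⟩ = c ⟨0, by omega⟩ + (m : ZMod 2) + 1 + (k : ZMod 2) := by
    intro k
    induction k with
    | zero => intro h'; simpa using h01
    | succ k ih =>
      intro h'
      rw [hstep (k + 1) (by omega) h', ih (by omega)]
      push_cast
      ring
  have heq := key _ _ (cycle_mk_adj_last m)
  rw [hf0 _ _ (by simp only [Fin.val_mk]; omega)] at heq
  rw [show (⟨m + 2, by omega⟩ : Fin (m + 3)) = ⟨m + 1 + 1, by omega⟩ from rfl] at heq
  rw [claim (m + 1) (by omega)] at heq
  push_cast at heq
  revert heq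
  generalize c ⟨0, by omega⟩ = x
  generalize (m : ZMod 2) = y
  revert x y
  decide

lemma choosable_mono {V : Type*} {G : SimpleGraph V} {k k' : ℕ}
    (h : IsGroupChoosable G k) (hkk' : k ≤ k') : IsGroupChoosable G k' := by
  intro A _ _ hA L hL f hf
  have hsub : ∀ v, ∃ t ⊆ L v, t.card = k :=
    fun v => Finset.exists_subset_card_eq (by rw [hL]; exact hkk')
  choose L' hsub hcard using hsub
  obtain ⟨c, hc1, hc2⟩ := h A (le_trans hkk' hA) L' hcard f hf
  exact ⟨c, fun v => hsub v (hc1 v), hc2⟩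

lemma colorable_of_choosable {V : Type*} {G : SimpleGraph V} (h : IsGroupChoosable G 3)
    (A : Type) [AddCommGroup A] [Fintype A] (hA : 3 ≤ Fintype.card A) :
    IsGroupColorable G A := by
  intro f hf
  obtain ⟨S, -, hS⟩ := Finset.exists_subset_card_eq (s := (Finset.univ : Finset A)) (n := 3)
    (by rwa [Finset.card_univ])
  obtain ⟨c, -, hc⟩ := h A hA (fun _ => S) (fun _ => hS) f hf
  exact ⟨c, hc⟩

lemma cycle_not_choosable_two (m : ℕ) : ¬ IsGroupChoosable (cycleGraph (m + 3)) 2 := by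
  intro h
  apply cycle_not_colorable m
  intro f hf
  obtain ⟨c, -, hc⟩ := h (ZMod 2) (by rw [ZMod.card]) (fun _ => Finset.univ)
    (fun _ => by rw [Finset.card_univ, ZMod.card]) f hf
  exact ⟨c, hc⟩

lemma groupChoiceNumber_cycle (m : ℕ) : groupChoiceNumber (cycleGraph (m + 3)) = 3 := by
  apply le_antisymm
  · exact Nat.sInf_le (cycle_choosable m)
  · refine le_csInf ⟨3, cycle_choosable m⟩ ?_
    intro k hk
    by_contra hlt
    push_neg at hlt
    exact cycle_not_choosable_two m (choosable_mono hk (by omega))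

lemma groupChromaticNumber_cycle (m : ℕ) : groupChromaticNumber (cycleGraph (m + 3)) = 3 := by
  have h3 : (3 : ℕ) ∈ {n : ℕ | ∀ (A : Type) [AddCommGroup A] [Fintype A],
      n ≤ Fintype.card A → IsGroupColorable (cycleGraph (m + 3)) A} :=
    fun A _ _ hA => colorable_of_choosable (cycle_choosable m) A hA
  apply le_antisymm
  · exact Nat.sInf_le h3
  · refine le_csInf ⟨3, h3⟩ ?_
    intro b hb
    by_contra hlt
    push_neg at hlt
    exact cycle_not_colorable m (hb (ZMod 2) (by rw [ZMod.card]; omega))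

lemma groupChoiceNumber_congr {V W : Type*} {G : SimpleGraph V} {H : SimpleGraph W}
    (e : G ≃g H) : groupChoiceNumber G = groupChoiceNumber H := by
  unfold groupChoiceNumber
  congr 1
  ext k
  exact ⟨fun h => isGroupChoosable_of_iso e.symm k h, fun h => isGroupChoosable_of_iso e k h⟩

lemma groupChromaticNumber_congr {V W : Type*} {G : SimpleGraph V} {H : SimpleGraph W}
    (e : G ≃g H) : groupChromaticNumber G = groupChromaticNumber H := by
  unfold groupChromaticNumber
  congr 1
  ext k
  exact ⟨fun h A _ _ hA => isGroupColorable_of_iso e.symm A (h A hA),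
    fun h A _ _ hA => isGroupColorable_of_iso e A (h A hA)⟩

/-- If `G` is a cycle (of length `n ≥ 3`), then `χ'_g(G) = χ'_gl(G) = 3`. -/
theorem groupEdgeChromaticNumber_eq_three_of_cycle {V : Type*} (G : SimpleGraph V)
    (hG : IsCycleGraph G) :
    groupEdgeChromaticNumber G = 3 ∧ groupEdgeChoiceNumber G = 3 := by
  obtain ⟨n, hn, ⟨e⟩⟩ := hG
  obtain ⟨m, rfl⟩ : ∃ m, n = m + 3 := ⟨n - 3, by omega⟩
  have iso : G.lineGraph ≃g cycleGraph (m + 3) := (lineGraphIso e).trans (lineCycleIso m)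
  constructor
  · rw [groupEdgeChromaticNumber, groupChromaticNumber_congr iso,
      groupChromaticNumber_cycle m]
  · rw [groupEdgeChoiceNumber, groupChoiceNumber_congr iso, groupChoiceNumber_cycle m]
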